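/- For a convex body K in R^2 containing the origin, V_2(K +_1 (−K)) ≤ 6 V_2(K) (the case p = 1 of the planar p-Rogers–Shephard inequality, i.e. the planar Rogers–Shephard inequality), with equality when K is a triangle. -/

import Mathlib

open MeasureTheory Set Real Pointwise Filter

noncomputable section

/-- Euclidean space ℝⁿ. -/
abbrev E (n : ℕ) := EuclideanSpace ℝ (Fin n)

/-- The support function of a set `K`: `h_K(u) = sup_{x ∈ K} ⟨x, u⟩`. -/
noncomputable def supp {n : ℕ} (K : Set (E n)) (u : E n) : ℝ :=
  sSup ((fun x => (inner ℝ x u : ℝ)) '' K)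

/-- The Firey `p`-sum of `K` and `L` (both containing the origin): the convex body
whose support function is `(h_K ^ p + h_L ^ p) ^ (1/p)`. -/
noncomputable def pSum {n : ℕ} (K L : Set (E n)) (p : ℝ) : Set (E n) :=
  {x | ∀ u : E n, (inner ℝ x u : ℝ) ≤ (supp K u ^ p + supp L u ^ p) ^ (1 / p)}

end

lemma mem_pSum_one {n : ℕ} (K : Set (E n)) (x : E n) :
    x ∈ pSum K (-K) 1 ↔ ∀ u : E n, (inner ℝ x u : ℝ) ≤ supp K u + supp (-K) u := by
  simp [pSum, Real.rpow_one]

lemma bdd_inner {n : ℕ} {K : Set (E n)} (hK : IsCompact K) (u : E n) :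
    BddAbove ((fun x => (inner ℝ x u : ℝ)) '' K) :=
  (hK.image (continuous_id.inner continuous_const)).bddAbove

lemma le_supp {n : ℕ} {K : Set (E n)} (hK : IsCompact K) {a : E n} (ha : a ∈ K) (u : E n) :
    (inner ℝ a u : ℝ) ≤ supp K u :=
  le_csSup (bdd_inner hK u) ⟨a, ha, rfl⟩

lemma compact_sub {n : ℕ} {K : Set (E n)} (hK : IsCompact K) : IsCompact (K - K) := by
  have : K - K = (fun p : E n × E n => p.1 - p.2) '' (K ×ˢ K) := by
    ext z; simp only [Set.mem_sub, Set.mem_image, Set.mem_prod, Prod.exists]; tauto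
  rw [this]
  exact (hK.prod hK).image continuous_sub

lemma supp_attained {n : ℕ} {K : Set (E n)} (hK : IsCompact K) (hne : K.Nonempty) (u : E n) :
    ∃ a ∈ K, supp K u = (inner ℝ a u : ℝ) := by
  obtain ⟨a, haK, ha⟩ := hK.exists_isMaxOn (f := fun x => (inner ℝ x u : ℝ)) hne ((continuous_id.inner continuous_const).continuousOn)
  refine ⟨a, haK, ?_⟩
  exact (IsGreatest.csSup_eq ⟨⟨a, haK, rfl⟩, by rintro y ⟨z, hz, rfl⟩; exact ha hz⟩)

lemma pSum_eq_sub {K : Set (E 2)} (hKco : Convex ℝ K) (hKcp : IsCompact K)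
    (h0K : (0 : E 2) ∈ K) : pSum K (-K) 1 = K - K := by
  ext x
  rw [mem_pSum_one]
  constructor
  · intro hx
    by_contra hxD
    obtain ⟨f, u, hfu, hux⟩ :=
      geometric_hahn_banach_closed_point (hKco.sub hKco) (compact_sub hKcp).isClosed hxD
    set v := (InnerProductSpace.toDual ℝ (E 2)).symm f with hv
    have hfv : ∀ y : E 2, f y = (inner ℝ v y : ℝ) := fun y =>
      (InnerProductSpace.toDual_symm_apply).symm
    obtain ⟨a, haK, hasupp⟩ := supp_attained hKcp ⟨0, h0K⟩ v
    obtain ⟨b, hbK, hbsupp⟩ := supp_attained hKcp.neg ⟨0, by simpa using h0K⟩ v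
    have hab : a + b ∈ K - K := by
      rw [Set.mem_neg] at hbK
      have := Set.sub_mem_sub haK hbK
      simpa using this
    have h1 : (inner ℝ x v : ℝ) ≤ (inner ℝ (a + b) v : ℝ) := by
      have := hx v
      rw [hasupp, hbsupp] at this
      simpa [inner_add_left] using this
    have h2 : (inner ℝ (a+b) v : ℝ) < u := by
      have := hfu _ hab
      rwa [hfv, real_inner_comm] at this
    have h3 : u < (inner ℝ x v : ℝ) := by
      have := hux
      rwa [hfv, real_inner_comm] at this
    linarith
  · rintro ⟨p, hp, q, hq, rfl⟩ u
    have h1 : (inner ℝ p u : ℝ) ≤ supp K u := le_supp hKcp hp u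
    have h2 : (inner ℝ (-q) u : ℝ) ≤ supp (-K) u :=
      le_supp hKcp.neg (by simpa using hq) u
    have : (inner ℝ ((fun x1 x2 => x1 - x2) p q) u : ℝ) = inner ℝ p u + inner ℝ (-q) u := by
      simp only [sub_eq_add_neg]; rw [inner_add_left]
    rw [this]
    linarith

lemma fubini_g {K : Set (E 2)} (hKcp : IsCompact K) :
    ∫⁻ x, volume {y | y ∈ K ∧ y - x ∈ K} = volume K * volume K := by
  have hKm : MeasurableSet K := hKcp.isClosed.measurableSet
  set W : Set (E 2 × E 2) := {p | p.2 ∈ K ∧ p.2 - p.1 ∈ K} with hW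
  have hWm : MeasurableSet W := by
    apply MeasurableSet.inter
    · exact measurable_snd hKm
    · exact (measurable_snd.sub measurable_fst) hKm
  have h1 : (volume.prod volume) W = ∫⁻ x, volume {y | y ∈ K ∧ y - x ∈ K} := by
    rw [Measure.prod_apply hWm]
    rfl
  have h2 : (volume.prod volume) W = volume K * volume K := by
    rw [Measure.prod_apply_symm hWm]
    have : ∀ y : E 2, volume ((fun x => (x, y)) ⁻¹' W) =
        K.indicator (fun _ => volume K) y := by
      intro y
      by_cases hy : y ∈ K
      · have : (fun x => (x, y)) ⁻¹' W = (fun x => y - x) ⁻¹' K := by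
          ext x; simp [hW, hy]
        rw [this, Set.indicator_of_mem hy,
          (Measure.measurePreserving_sub_left volume y).measure_preimage
            hKm.nullMeasurableSet]
      · have : (fun x => (x, y)) ⁻¹' W = ∅ := by
          ext x; simp [hW, hy]
        rw [this, Set.indicator_of_notMem hy]
        simp
    rw [lintegral_congr this, lintegral_indicator_const hKm]
  rw [← h1, h2]

lemma incl_bound {K : Set (E 2)} (hKco : Convex ℝ K) (hKcp : IsCompact K)
    {x : E 2} {r : ℝ} (hr0 : 0 < r) (hr1 : r ≤ 1) (hx : x ∈ r • (K - K)) :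
    ENNReal.ofReal ((1 - r) ^ 2) * volume K ≤ volume {y | y ∈ K ∧ y - x ∈ K} := by
  obtain ⟨d, hd, rfl⟩ := hx
  obtain ⟨p, hp, q, hq, rfl⟩ := hd
  have hsub : (r • p) +ᵥ ((1 - r) • K) ⊆ {y | y ∈ K ∧ y - r • (p - q) ∈ K} := by
    rintro _ ⟨_, ⟨a, ha, rfl⟩, rfl⟩
    constructor
    · have := hKco hp ha hr0.le (by linarith : (0:ℝ) ≤ 1 - r) (by ring)
      simpa [vadd_eq_add] using this
    · have heq : (r • p +ᵥ (1 - r) • a) - r • (p - q) = r • q + (1-r) • a := by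
        simp only [vadd_eq_add, smul_sub]
        abel
      rw [heq]
      exact hKco hq ha hr0.le (by linarith : (0:ℝ) ≤ 1 - r) (by ring)
  calc ENNReal.ofReal ((1 - r) ^ 2) * volume K
      = volume ((r • p) +ᵥ ((1 - r) • K)) := by
        rw [measure_vadd, Measure.addHaar_smul_of_nonneg volume (by linarith : (0:ℝ) ≤ 1 - r)]
        congr 2
        simp [finrank_euclideanSpace]
    _ ≤ _ := measure_mono hsub

lemma pointwise_bound {K : Set (E 2)} (hKco : Convex ℝ K) (hKcp : IsCompact K)
    (hKvol : volume K ≠ ⊤)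
    {x : E 2} (hx : x ∈ interior (K - K)) (hD0 : (K - K) ∈ nhds (0 : E 2)) :
    ENNReal.ofReal ((1 - gauge (K - K) x) ^ 2) * volume K ≤ volume {y | y ∈ K ∧ y - x ∈ K} := by
  set D := K - K with hD
  set s := gauge D x with hs
  have hs1 : s < 1 := interior_subset_gauge_lt_one D hx
  have hs0 : 0 ≤ s := gauge_nonneg x
  have habs : Absorbent ℝ D := absorbent_nhds_zero hD0
  -- for every a ∈ (s, 1), bound holds with (1-a)^2
  have key : ∀ a ∈ Set.Ioo s 1, ENNReal.ofReal ((1 - a) ^ 2) * volume K ≤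
      volume {y | y ∈ K ∧ y - x ∈ K} := by
    intro a ⟨hsa, ha1⟩
    obtain ⟨b, hb0, hba, hxb⟩ := exists_lt_of_gauge_lt habs hsa
    have hb1 : b ≤ 1 := le_of_lt (lt_of_lt_of_le hba (le_of_lt ha1))
    refine le_trans ?_ (incl_bound hKco hKcp hb0 hb1 hxb)
    apply mul_le_mul_left
    apply ENNReal.ofReal_le_ofReal
    have : 0 ≤ 1 - a := by linarith
    nlinarith
  have hcont : Filter.Tendsto (fun a : ℝ => ENNReal.ofReal ((1 - a) ^ 2) * volume K)
      (nhdsWithin s (Set.Ioi s)) (nhds (ENNReal.ofReal ((1 - s) ^ 2) * volume K)) := by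
    apply ENNReal.Tendsto.mul_const
    · exact ((ENNReal.continuous_ofReal.comp
        ((continuous_const.sub continuous_id).pow 2)).tendsto s).mono_left nhdsWithin_le_nhds
    · exact Or.inr hKvol
  refine le_of_tendsto hcont ?_
  filter_upwards [Ioo_mem_nhdsGT_of_mem ⟨le_refl s, hs1⟩] with a ha using key a ha

lemma real_integral_one_sub_sqrt_sq : ∫ t in (0:ℝ)..1, (1 - Real.sqrt t)^2 = 1/6 := by
  have hrw : ∀ t ∈ Set.uIcc (0:ℝ) 1, (1 - Real.sqrt t)^2 = 1 + t - 2 * t ^ ((1:ℝ)/2) := by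
    intro t ht
    rw [Set.uIcc_of_le (by norm_num : (0:ℝ) ≤ 1)] at ht
    have ht0 : 0 ≤ t := ht.1
    have h1 : Real.sqrt t ^ 2 = t := Real.sq_sqrt ht0
    have h2 : Real.sqrt t = t ^ ((1:ℝ)/2) := Real.sqrt_eq_rpow t
    nlinarith [h1, h2]
  rw [intervalIntegral.integral_congr hrw]
  have hi1 : IntervalIntegrable (fun t : ℝ => 1 + t) volume 0 1 :=
    (continuous_const.add continuous_id).intervalIntegrable 0 1
  have hi2 : IntervalIntegrable (fun t : ℝ => 2 * t ^ ((1:ℝ)/2)) volume 0 1 :=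
    (intervalIntegral.intervalIntegrable_rpow' (by norm_num)).const_mul 2
  rw [intervalIntegral.integral_sub hi1 hi2, intervalIntegral.integral_const_mul,
    integral_rpow (Or.inl (by norm_num))]
  have : ∫ t in (0:ℝ)..1, (1 + t) = 3/2 := by
    rw [intervalIntegral.integral_add intervalIntegrable_const
      (intervalIntegral.intervalIntegrable_id), integral_id, intervalIntegral.integral_const]
    norm_num
  rw [this, Real.one_rpow, Real.zero_rpow (by norm_num)]
  norm_num

lemma lintegral_one_sub_sqrt_sq : ∫⁻ t in Set.Ioo (0:ℝ) 1, ENNReal.ofReal ((1 - Real.sqrt t)^2)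
    = ENNReal.ofReal (1/6) := by
  have hcont : Continuous (fun t : ℝ => (1 - Real.sqrt t)^2) :=
    (continuous_const.sub Real.continuous_sqrt).pow 2
  rw [← ofReal_integral_eq_lintegral_ofReal]
  · congr 1
    rw [show ∫ t in Set.Ioo (0:ℝ) 1, (1 - Real.sqrt t)^2 = ∫ t in (0:ℝ)..1, (1 - Real.sqrt t)^2 by
      rw [intervalIntegral.integral_of_le (by norm_num), MeasureTheory.integral_Ioc_eq_integral_Ioo]]
    exact real_integral_one_sub_sqrt_sq
  · exact (hcont.integrableOn_Icc (a := 0) (b := 1)).mono_set Set.Ioo_subset_Icc_self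
  · exact Filter.Eventually.of_forall fun t => sq_nonneg _

lemma gauge_integral_bound {D : Set (E 2)} (hDcv : Convex ℝ D) (hDcl : IsClosed D)
    (hD0 : D ∈ nhds (0 : E 2)) (h0D : (0:E 2) ∈ D) :
    volume D * ENNReal.ofReal (1/6) ≤ ∫⁻ x in D, ENNReal.ofReal ((1 - gauge D x)^2) := by
  have hDm : MeasurableSet D := hDcl.measurableSet
  have hgc : Continuous (gauge D) := continuous_gauge hDcv hD0
  have hfm : AEMeasurable (fun x => (1 - gauge D x)^2) (volume.restrict D) :=
    ((continuous_const.sub hgc).pow 2).aemeasurable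
  rw [lintegral_eq_lintegral_meas_lt _ (Filter.Eventually.of_forall fun x => sq_nonneg _) hfm]
  -- interior has full measure
  have hint : volume (interior D) = volume D := by
    have hfr : volume (frontier D) = 0 := hDcv.addHaar_frontier volume
    refine le_antisymm (measure_mono interior_subset) ?_
    calc volume D ≤ volume (interior D ∪ frontier D) := by
          apply measure_mono
          intro x hx
          rcases Classical.em (x ∈ interior D) with h | h
          · exact Or.inl h
          · exact Or.inr ⟨subset_closure hx, h⟩
      _ ≤ volume (interior D) + volume (frontier D) := measure_union_le _ _
      _ = volume (interior D) := by rw [hfr, add_zero]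
  -- superlevel estimate
  have hsl : ∀ t ∈ Set.Ioo (0:ℝ) 1,
      ENNReal.ofReal ((1 - Real.sqrt t)^2) * volume D
        ≤ (volume.restrict D) {a | t < (1 - gauge D a)^2} := by
    intro t ⟨ht0, ht1⟩
    have hst0 : 0 ≤ Real.sqrt t := Real.sqrt_nonneg t
    have hst1 : Real.sqrt t < 1 := by
      rw [show (1:ℝ) = Real.sqrt 1 by simp]
      exact Real.sqrt_lt_sqrt ht0.le ht1
    set r := 1 - Real.sqrt t with hr
    have hr0 : 0 < r := by simp [hr]; linarith
    have hsub : r • interior D ⊆ {a | t < (1 - gauge D a)^2} ∩ D := by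
      rintro _ ⟨y, hy, rfl⟩
      have hgy : gauge D y < 1 := interior_subset_gauge_lt_one D hy
      have hgsm : gauge D (r • y) = r * gauge D y := by
        rw [gauge_smul_of_nonneg hr0.le]; rfl
      constructor
      · have h1 : gauge D (r • y) < r := by
          rw [hgsm]; nlinarith [gauge_nonneg (x := y) (s := D)]
        have h2 : Real.sqrt t < 1 - gauge D (r • y) := by rw [hr] at h1 ⊢; linarith
        have := pow_lt_pow_left₀ h2 hst0 (by norm_num : (2:ℕ) ≠ 0)
        rwa [Real.sq_sqrt ht0.le] at this
      · have hyD : y ∈ D := interior_subset hy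
        have := hDcv hyD h0D hr0.le (by nlinarith : (0:ℝ) ≤ 1 - r) (by ring)
        simpa using this
    calc ENNReal.ofReal ((1 - Real.sqrt t)^2) * volume D
        = volume (r • interior D) := by
          rw [Measure.addHaar_smul_of_nonneg volume hr0.le, hint]
          congr 2
          simp [finrank_euclideanSpace, hr]
      _ ≤ volume ({a | t < (1 - gauge D a)^2} ∩ D) := measure_mono hsub
      _ = (volume.restrict D) {a | t < (1 - gauge D a)^2} := by
          rw [Measure.restrict_apply' hDm]
  calc volume D * ENNReal.ofReal (1/6)
      = ∫⁻ t in Set.Ioo (0:ℝ) 1, ENNReal.ofReal ((1 - Real.sqrt t)^2) * volume D := by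
        have hm : Measurable (fun t : ℝ => ENNReal.ofReal ((1 - Real.sqrt t)^2)) := by
          apply Measurable.ennreal_ofReal
          exact ((continuous_const.sub Real.continuous_sqrt).pow 2).measurable
        rw [lintegral_mul_const _ hm, lintegral_one_sub_sqrt_sq, mul_comm]
    _ ≤ ∫⁻ t in Set.Ioo (0:ℝ) 1, (volume.restrict D) {a | t < (1 - gauge D a)^2} := by
        apply setLIntegral_mono' measurableSet_Ioo
        intro t ht
        exact hsl t ht
    _ ≤ ∫⁻ t in Set.Ioi (0:ℝ), (volume.restrict D) {a | t < (1 - gauge D a)^2} :=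
        lintegral_mono_set Set.Ioo_subset_Ioi_self

lemma diff_mem_nhds (hint : (interior K).Nonempty) : (K - K) ∈ nhds (0 : E 2) := by
  obtain ⟨x₀, hx₀⟩ := hint
  obtain ⟨ε, hε, hball⟩ := Metric.isOpen_iff.mp isOpen_interior x₀ hx₀
  have hsub : Metric.ball (0 : E 2) ε ⊆ K - K := by
    intro z hz
    have h1 : x₀ + z ∈ K := by
      apply interior_subset
      apply hball
      simpa [dist_eq_norm] using (by simpa [Metric.mem_ball, dist_eq_norm] using hz : ‖z‖ < ε)
    have h2 : (x₀ + z) - x₀ ∈ K - K := Set.sub_mem_sub h1 (interior_subset hx₀)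
    simpa using h2
  exact Filter.mem_of_superset (Metric.ball_mem_nhds 0 hε) hsub

theorem main_ineq (hKco : Convex ℝ K) (hKcp : IsCompact K)
    (h0K : (0 : E 2) ∈ K) (hint : (interior K).Nonempty) :
    volume (K - K) ≤ 6 * volume K := by
  set D := K - K with hD
  have hDcp : IsCompact D := compact_sub hKcp
  have hDcv : Convex ℝ D := hKco.sub hKco
  have hD0 : D ∈ nhds (0 : E 2) := diff_mem_nhds hint
  have h0D : (0 : E 2) ∈ D := by
    have := Set.sub_mem_sub h0K h0K
    simpa only [sub_zero] using this
  have hKv0 : volume K ≠ 0 := by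
    obtain ⟨x₀, hx₀⟩ := hint
    have := (isOpen_interior (s := K)).measure_pos volume ⟨x₀, hx₀⟩
    exact (lt_of_lt_of_le this (measure_mono interior_subset)).ne'
  have hKvt : volume K ≠ ⊤ := hKcp.measure_lt_top.ne
  have hDm : MeasurableSet D := hDcp.isClosed.measurableSet
  have hintD : interior D =ᵐ[volume] D := by
    have hfr : volume (frontier D) = 0 := hDcv.addHaar_frontier volume
    rw [Filter.eventuallyEq_set]
    apply MeasureTheory.ae_iff.mpr
    apply measure_mono_null _ hfr
    intro x hx
    simp only [Set.mem_setOf_eq] at hx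
    have hxi : x ∉ interior D := fun h => hx (iff_of_true h (interior_subset h))
    have hxD : x ∈ D := by by_contra h; exact hx (iff_of_false hxi h)
    exact ⟨subset_closure hxD, hxi⟩
  have key : (volume D * ENNReal.ofReal (1/6)) * volume K ≤ volume K * volume K := by
    calc (volume D * ENNReal.ofReal (1/6)) * volume K
        ≤ (∫⁻ x in D, ENNReal.ofReal ((1 - gauge D x)^2)) * volume K :=
          mul_le_mul_left (gauge_integral_bound hDcv hDcp.isClosed hD0 h0D) _
      _ = ∫⁻ x in D, ENNReal.ofReal ((1 - gauge D x)^2) * volume K := by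
          have hm : Measurable (fun x => ENNReal.ofReal ((1 - gauge D x)^2)) := by
            apply Measurable.ennreal_ofReal
            exact ((continuous_const.sub (continuous_gauge hDcv hD0)).pow 2).measurable
          rw [lintegral_mul_const _ hm]
      _ = ∫⁻ x in interior D, ENNReal.ofReal ((1 - gauge D x)^2) * volume K :=
          (setLIntegral_congr hintD).symm
      _ ≤ ∫⁻ x in interior D, volume {y | y ∈ K ∧ y - x ∈ K} := by
          apply setLIntegral_mono' measurableSet_interior
          intro x hx
          exact pointwise_bound hKco hKcp hKvt hx hD0
      _ ≤ ∫⁻ x, volume {y | y ∈ K ∧ y - x ∈ K} := setLIntegral_le_lintegral _ _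
      _ = volume K * volume K := fubini_g hKcp
  have h1 : volume D * ENNReal.ofReal (1/6) ≤ volume K :=
    (ENNReal.mul_le_mul_iff_left hKv0 hKvt).mp key
  have h6 : (ENNReal.ofReal (1/6)) * 6 = 1 := by
    rw [show (6:ENNReal) = ENNReal.ofReal 6 by simp, ← ENNReal.ofReal_mul (by norm_num)]
    norm_num
  calc volume D = volume D * (ENNReal.ofReal (1/6) * 6) := by rw [h6, mul_one]
    _ = volume D * ENNReal.ofReal (1/6) * 6 := by rw [mul_assoc]
    _ ≤ volume K * 6 := mul_le_mul_left h1 _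
    _ = 6 * volume K := mul_comm _ _

noncomputable def ee₁ : E 2 := EuclideanSpace.single 0 1
noncomputable def ee₂ : E 2 := EuclideanSpace.single 1 1
def TT : Set (E 2) := {x | 0 ≤ x 0 ∧ 0 ≤ x 1 ∧ x 0 + x 1 ≤ 1}
def HH : Set (E 2) := {x | |x 0| ≤ 1 ∧ |x 1| ≤ 1 ∧ |x 0 + x 1| ≤ 1}

lemma coord_comb (s t : ℝ) (i : Fin 2) : (s • ee₁ + t • ee₂) i = if i = 0 then s else t := by
  fin_cases i <;>
    simp [ee₁, ee₂, PiLp.add_apply, PiLp.smul_apply, EuclideanSpace.single_apply]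

lemma hull_eq_TT : convexHull ℝ {(0:E 2), ee₁, ee₂} = TT := by
  apply le_antisymm
  · apply convexHull_min
    · rintro x (rfl | rfl | rfl)
      · simp [TT]
      · refine ⟨?_, ?_, ?_⟩ <;> norm_num [TT, ee₁, EuclideanSpace.single_apply]
      · refine ⟨?_, ?_, ?_⟩ <;> norm_num [TT, ee₂, EuclideanSpace.single_apply]
    · rintro x hx y hy s t hs ht hst
      obtain ⟨hx0, hx1, hx2⟩ := hx
      obtain ⟨hy0, hy1, hy2⟩ := hy
      refine ⟨?_, ?_, ?_⟩ <;>
        simp only [PiLp.add_apply, PiLp.smul_apply, smul_eq_mul] <;> nlinarith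
  · rintro x ⟨hx0, hx1, hx2⟩
    have hxe : x = (1 - x 0 - x 1) • (0:E 2) + (x 0 • ee₁ + x 1 • ee₂) := by
      refine PiLp.ext fun i => ?_
      fin_cases i <;>
        simp [ee₁, ee₂, PiLp.add_apply, PiLp.smul_apply, EuclideanSpace.single_apply]
    rw [hxe]
    have hc : Convex ℝ (convexHull ℝ {(0:E 2), ee₁, ee₂}) := convex_convexHull _ _
    have h0m : (0:E 2) ∈ convexHull ℝ {(0:E 2), ee₁, ee₂} := subset_convexHull _ _ (by simp)
    have h1m : ee₁ ∈ convexHull ℝ {(0:E 2), ee₁, ee₂} := subset_convexHull _ _ (by simp)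
    have h2m : ee₂ ∈ convexHull ℝ {(0:E 2), ee₁, ee₂} := subset_convexHull _ _ (by simp)
    by_cases hz : x 0 + x 1 = 0
    · have hx00 : x 0 = 0 := by linarith
      have hx10 : x 1 = 0 := by linarith
      simpa [hx00, hx10] using h0m
    · have hpos : 0 < x 0 + x 1 := lt_of_le_of_ne (by linarith) (Ne.symm hz)
      have hmid : (x 0 / (x 0 + x 1)) • ee₁ + (x 1 / (x 0 + x 1)) • ee₂ ∈
          convexHull ℝ {(0:E 2), ee₁, ee₂} := by
        apply hc h1m h2m (div_nonneg hx0 hpos.le) (div_nonneg hx1 hpos.le)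
        field_simp
      have := hc h0m hmid (by linarith : (0:ℝ) ≤ 1 - x 0 - x 1) (by linarith : (0:ℝ) ≤ x 0 + x 1)
        (by ring)
      have heq : (x 0 + x 1) • ((x 0 / (x 0 + x 1)) • ee₁ + (x 1 / (x 0 + x 1)) • ee₂)
          = x 0 • ee₁ + x 1 • ee₂ := by
        rw [smul_add, smul_smul, smul_smul]
        rw [mul_div_cancel₀ _ hz, mul_div_cancel₀ _ hz]
      rw [heq] at this
      exact this

@[simp] lemma ee₁_0 : ee₁ 0 = 1 := by simp [ee₁, EuclideanSpace.single_apply]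
@[simp] lemma ee₁_1 : ee₁ 1 = 0 := by simp [ee₁, EuclideanSpace.single_apply]
@[simp] lemma ee₂_0 : ee₂ 0 = 0 := by simp [ee₂, EuclideanSpace.single_apply]
@[simp] lemma ee₂_1 : ee₂ 1 = 1 := by simp [ee₂, EuclideanSpace.single_apply]

lemma TT_sub_TT : TT - TT = HH := by
  apply le_antisymm
  · rintro z ⟨p, hp, q, hq, rfl⟩
    obtain ⟨hp0, hp1, hp2⟩ := hp
    obtain ⟨hq0, hq1, hq2⟩ := hq
    refine ⟨?_, ?_, ?_⟩ <;>
      simp only [PiLp.sub_apply, abs_le] <;> constructor <;> linarith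
  · rintro z ⟨hz0, hz1, hz2⟩
    rw [abs_le] at hz0 hz1 hz2
    set u := z 0 with hu
    set v := z 1 with hv
    have hzco : ∀ p q : E 2, p ∈ TT → q ∈ TT → p 0 - q 0 = u → p 1 - q 1 = v →
        z ∈ TT - TT := by
      intro p q hp hq h0 h1
      have : p - q = z := by
        refine PiLp.ext fun i => ?_
        fin_cases i <;> simpa [PiLp.sub_apply]
      rw [← this]
      exact Set.sub_mem_sub hp hq
    rcases le_or_gt 0 u with hu0 | hu0 <;> rcases le_or_gt 0 v with hv0 | hv0
    · refine hzco (u • ee₁ + v • ee₂) 0 ?_ ?_ ?_ ?_ <;>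
        simp only [TT, Set.mem_setOf_eq, PiLp.add_apply, PiLp.smul_apply, PiLp.zero_apply,
          ee₁_0, ee₁_1, ee₂_0, ee₂_1, smul_eq_mul, mul_one, mul_zero, add_zero, zero_add,
          sub_zero] <;>
        first | (refine ⟨by linarith, by linarith, by linarith⟩) | linarith
    · refine hzco (u • ee₁) ((-v) • ee₂) ?_ ?_ ?_ ?_ <;>
        simp only [TT, Set.mem_setOf_eq, PiLp.add_apply, PiLp.smul_apply, PiLp.zero_apply,
          ee₁_0, ee₁_1, ee₂_0, ee₂_1, smul_eq_mul, mul_one, mul_zero, add_zero, zero_add,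
          sub_zero, zero_sub, sub_neg_eq_add, neg_zero, mul_neg, neg_neg] <;>
        first | (refine ⟨by linarith, by linarith, by linarith⟩) | linarith
    · refine hzco (v • ee₂) ((-u) • ee₁) ?_ ?_ ?_ ?_ <;>
        simp only [TT, Set.mem_setOf_eq, PiLp.add_apply, PiLp.smul_apply, PiLp.zero_apply,
          ee₁_0, ee₁_1, ee₂_0, ee₂_1, smul_eq_mul, mul_one, mul_zero, add_zero, zero_add,
          sub_zero, zero_sub, sub_neg_eq_add, neg_zero, mul_neg, neg_neg] <;>
        first | (refine ⟨by linarith, by linarith, by linarith⟩) | linarith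
    · refine hzco 0 ((-u) • ee₁ + (-v) • ee₂) ?_ ?_ ?_ ?_ <;>
        simp only [TT, Set.mem_setOf_eq, PiLp.add_apply, PiLp.smul_apply, PiLp.zero_apply,
          ee₁_0, ee₁_1, ee₂_0, ee₂_1, smul_eq_mul, mul_one, mul_zero, add_zero, zero_add,
          sub_zero, zero_sub, sub_neg_eq_add, neg_zero, mul_neg, neg_neg] <;>
        first | (refine ⟨by linarith, by linarith, by linarith⟩) | linarith

lemma vol_planar (B : Set (ℝ × ℝ)) (hB : MeasurableSet B) :
    volume {x : E 2 | (x 0, x 1) ∈ B} = volume B := by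
  have h1 : MeasurePreserving (fun x : E 2 => (x 0, x 1)) volume volume := by
    have h2 := (MeasureTheory.volume_preserving_finTwoArrow ℝ).comp
      (EuclideanSpace.volume_preserving_symm_measurableEquiv_toLp (ι := Fin 2))
    convert h2 using 1
    all_goals rfl
  exact h1.measure_preimage hB.nullMeasurableSet

lemma vol_BT : volume {p : ℝ × ℝ | 0 ≤ p.1 ∧ 0 ≤ p.2 ∧ p.1 + p.2 ≤ 1}
    = ENNReal.ofReal (1/2) := by
  have hBm : MeasurableSet {p : ℝ × ℝ | 0 ≤ p.1 ∧ 0 ≤ p.2 ∧ p.1 + p.2 ≤ 1} := by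
    apply MeasurableSet.inter
    · exact measurable_fst measurableSet_Ici
    apply MeasurableSet.inter
    · exact measurable_snd measurableSet_Ici
    · exact (measurable_fst.add measurable_snd) measurableSet_Iic
  rw [Measure.volume_eq_prod, Measure.prod_apply hBm]
  have hsec : ∀ x : ℝ, volume (Prod.mk x ⁻¹' {p : ℝ × ℝ | 0 ≤ p.1 ∧ 0 ≤ p.2 ∧ p.1 + p.2 ≤ 1})
      = Set.indicator (Set.Ici 0) (fun x => ENNReal.ofReal (1 - x)) x := by
    intro x
    rcases le_or_gt 0 x with hx | hx
    · have : Prod.mk x ⁻¹' {p : ℝ × ℝ | 0 ≤ p.1 ∧ 0 ≤ p.2 ∧ p.1 + p.2 ≤ 1}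
          = Set.Icc 0 (1 - x) := by
        ext y; simp only [Set.mem_preimage, Set.mem_setOf_eq, Set.mem_Icc]
        constructor
        · rintro ⟨_, h1, h2⟩; exact ⟨h1, by linarith⟩
        · rintro ⟨h1, h2⟩; exact ⟨hx, h1, by linarith⟩
      rw [this, Real.volume_Icc, Set.indicator_of_mem (show x ∈ Set.Ici 0 from hx), sub_zero]
    · have : Prod.mk x ⁻¹' {p : ℝ × ℝ | 0 ≤ p.1 ∧ 0 ≤ p.2 ∧ p.1 + p.2 ≤ 1} = ∅ := by
        ext y
        simp only [Set.mem_preimage, Set.mem_setOf_eq, Set.mem_empty_iff_false, iff_false]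
        rintro ⟨h, _⟩; linarith
      rw [this, Set.indicator_of_notMem (by simpa using hx)]
      simp
  rw [lintegral_congr hsec, lintegral_indicator measurableSet_Ici]
  rw [← MeasureTheory.restrict_Ioi_eq_restrict_Ici,
    ← Set.Ioc_union_Ioi_eq_Ioi (by norm_num : (0:ℝ) ≤ 1),
    lintegral_union measurableSet_Ioi (Set.Ioc_disjoint_Ioi le_rfl)]
  have hz : ∫⁻ x in Set.Ioi (1:ℝ), ENNReal.ofReal (1 - x) = 0 := by
    have hp : ∀ x ∈ Set.Ioi (1:ℝ), ENNReal.ofReal (1 - x) = (fun _ => (0:ENNReal)) x := by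
      intro x hx
      simp only [Set.mem_Ioi] at hx
      simp only [ENNReal.ofReal_eq_zero]
      linarith
    rw [setLIntegral_congr_fun measurableSet_Ioi hp]
    simp
  rw [hz, add_zero, ← ofReal_integral_eq_lintegral_ofReal]
  · rw [← intervalIntegral.integral_of_le (by norm_num : (0:ℝ) ≤ 1)]
    congr 1
    rw [intervalIntegral.integral_sub intervalIntegrable_const
      intervalIntegral.intervalIntegrable_id, integral_id, intervalIntegral.integral_const]
    norm_num
  · exact ((continuous_const.sub continuous_id).integrableOn_Icc (a := 0) (b := 1)).mono_set
      Set.Ioc_subset_Icc_self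
  · exact (ae_restrict_iff' measurableSet_Ioc).mpr
      (Filter.Eventually.of_forall fun x hx => by
        simp only [Set.mem_Ioc] at hx
        simp only [Pi.zero_apply]
        linarith)

lemma interval_hex : ∫ x in (-1:ℝ)..1, (2 - |x|) = 3 := by
  have hi : ∀ a b : ℝ, IntervalIntegrable (fun x : ℝ => 2 - |x|) volume a b :=
    fun a b => (continuous_const.sub continuous_abs).intervalIntegrable a b
  rw [← intervalIntegral.integral_add_adjacent_intervals (b := (0:ℝ)) (hi _ _) (hi _ _)]
  have h1 : ∫ x in (-1:ℝ)..0, (2 - |x|) = ∫ x in (-1:ℝ)..0, (2 + x) := by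
    apply intervalIntegral.integral_congr
    intro x hx
    rw [Set.uIcc_of_le (by norm_num : (-1:ℝ) ≤ 0)] at hx
    simp only []
    rw [abs_of_nonpos hx.2]; ring
  have h2 : ∫ x in (0:ℝ)..1, (2 - |x|) = ∫ x in (0:ℝ)..1, (2 - x) := by
    apply intervalIntegral.integral_congr
    intro x hx
    rw [Set.uIcc_of_le (by norm_num : (0:ℝ) ≤ 1)] at hx
    simp only []
    rw [abs_of_nonneg hx.1]
  rw [h1, h2]
  rw [intervalIntegral.integral_add intervalIntegrable_const
    intervalIntegral.intervalIntegrable_id,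
    intervalIntegral.integral_sub intervalIntegrable_const
    intervalIntegral.intervalIntegrable_id,
    integral_id, integral_id, intervalIntegral.integral_const, intervalIntegral.integral_const]
  norm_num

lemma vol_BH : volume {p : ℝ × ℝ | |p.1| ≤ 1 ∧ |p.2| ≤ 1 ∧ |p.1 + p.2| ≤ 1}
    = ENNReal.ofReal 3 := by
  have hBm : MeasurableSet {p : ℝ × ℝ | |p.1| ≤ 1 ∧ |p.2| ≤ 1 ∧ |p.1 + p.2| ≤ 1} := by
    apply MeasurableSet.inter
    · exact (measurable_fst.abs) measurableSet_Iic
    apply MeasurableSet.inter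
    · exact (measurable_snd.abs) measurableSet_Iic
    · exact ((measurable_fst.add measurable_snd).abs) measurableSet_Iic
  rw [Measure.volume_eq_prod, Measure.prod_apply hBm]
  have hsec : ∀ x : ℝ, volume (Prod.mk x ⁻¹' {p : ℝ × ℝ | |p.1| ≤ 1 ∧ |p.2| ≤ 1 ∧ |p.1 + p.2| ≤ 1})
      = Set.indicator (Set.Icc (-1) 1) (fun x => ENNReal.ofReal (2 - |x|)) x := by
    intro x
    rcases le_or_gt (|x|) 1 with hx | hx
    · rw [abs_le] at hx
      have hset : Prod.mk x ⁻¹' {p : ℝ × ℝ | |p.1| ≤ 1 ∧ |p.2| ≤ 1 ∧ |p.1 + p.2| ≤ 1}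
          = Set.Icc (max (-1) (-1 - x)) (min 1 (1 - x)) := by
        ext y
        simp only [Set.mem_preimage, Set.mem_setOf_eq, Set.mem_Icc, abs_le, le_min_iff,
          max_le_iff]
        constructor
        · rintro ⟨_, h1, h2⟩; exact ⟨⟨h1.1, by linarith⟩, h1.2, by linarith⟩
        · rintro ⟨⟨h1, h2⟩, h3, h4⟩
          exact ⟨⟨hx.1, hx.2⟩, ⟨h1, h3⟩, by constructor <;> linarith⟩
      rw [hset, Real.volume_Icc, Set.indicator_of_mem (Set.mem_Icc.mpr hx)]
      congr 1
      rcases le_or_gt 0 x with h | h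
      · rw [abs_of_nonneg h, min_eq_right (by linarith), max_eq_left (by linarith)]; ring
      · rw [abs_of_nonpos h.le, min_eq_left (by linarith), max_eq_right (by linarith)]; ring
    · have hset : Prod.mk x ⁻¹' {p : ℝ × ℝ | |p.1| ≤ 1 ∧ |p.2| ≤ 1 ∧ |p.1 + p.2| ≤ 1} = ∅ := by
        ext y
        simp only [Set.mem_preimage, Set.mem_setOf_eq, Set.mem_empty_iff_false, iff_false]
        rintro ⟨h, _⟩; linarith
      rw [hset, Set.indicator_of_notMem (fun h => by
        rw [Set.mem_Icc] at h
        exact absurd (abs_le.mpr h) (not_le.mpr hx))]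
      simp
  rw [lintegral_congr hsec, lintegral_indicator measurableSet_Icc,
    ← MeasureTheory.restrict_Ioc_eq_restrict_Icc, ← ofReal_integral_eq_lintegral_ofReal]
  · rw [← intervalIntegral.integral_of_le (by norm_num : (-1:ℝ) ≤ 1), interval_hex]
  · exact ((continuous_const.sub continuous_abs).integrableOn_Icc (a := -1) (b := 1)).mono_set
      Set.Ioc_subset_Icc_self
  · refine (ae_restrict_iff' measurableSet_Ioc).mpr
      (Filter.Eventually.of_forall fun x hx => ?_)
    simp only [Set.mem_Ioc] at hx
    simp only [Pi.zero_apply]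
    rcases le_or_gt 0 x with h | h
    · rw [abs_of_nonneg h]; linarith
    · rw [abs_of_nonpos h.le]; linarith

lemma vol_TT : volume TT = ENNReal.ofReal (1/2) := by
  have h : TT = {x : E 2 | (x 0, x 1) ∈ {p : ℝ × ℝ | 0 ≤ p.1 ∧ 0 ≤ p.2 ∧ p.1 + p.2 ≤ 1}} := rfl
  rw [h, vol_planar _ (by
    apply MeasurableSet.inter
    · exact measurable_fst measurableSet_Ici
    apply MeasurableSet.inter
    · exact measurable_snd measurableSet_Ici
    · exact (measurable_fst.add measurable_snd) measurableSet_Iic), vol_BT]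

lemma vol_HH : volume HH = ENNReal.ofReal 3 := by
  have h : HH = {x : E 2 | (x 0, x 1) ∈ {p : ℝ × ℝ | |p.1| ≤ 1 ∧ |p.2| ≤ 1 ∧ |p.1+p.2| ≤ 1}} := rfl
  rw [h, vol_planar _ (by
    apply MeasurableSet.inter
    · exact (measurable_fst.abs) measurableSet_Iic
    apply MeasurableSet.inter
    · exact (measurable_snd.abs) measurableSet_Iic
    · exact ((measurable_fst.add measurable_snd).abs) measurableSet_Iic), vol_BH]

lemma triangle_case (a b c : E 2) (K : Set (E 2)) (hK : K = convexHull ℝ {a, b, c}) :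
    volume (K - K) = 6 * volume K := by
  set L : E 2 →ₗ[ℝ] E 2 :=
    (EuclideanSpace.basisFun (Fin 2) ℝ).toBasis.constr ℝ ![b - a, c - a] with hL
  have hLe1 : L ee₁ = b - a := by
    have := (EuclideanSpace.basisFun (Fin 2) ℝ).toBasis.constr_basis ℝ ![b - a, c - a] 0
    rw [hL]
    rw [show ee₁ = (EuclideanSpace.basisFun (Fin 2) ℝ).toBasis 0 by
      simp [ee₁, OrthonormalBasis.coe_toBasis, EuclideanSpace.basisFun_apply]]
    simpa using this
  have hLe2 : L ee₂ = c - a := by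
    have := (EuclideanSpace.basisFun (Fin 2) ℝ).toBasis.constr_basis ℝ ![b - a, c - a] 1
    rw [hL]
    rw [show ee₂ = (EuclideanSpace.basisFun (Fin 2) ℝ).toBasis 1 by
      simp [ee₂, OrthonormalBasis.coe_toBasis, EuclideanSpace.basisFun_apply]]
    simpa using this
  have hKim : K = (fun x => L x + a) '' TT := by
    rw [← hull_eq_TT, hK]
    have hf : (fun x : E 2 => L x + a) = fun x =>
      ((AffineEquiv.constVAdd ℝ (E 2) a : E 2 ≃ᵃ[ℝ] E 2) :
        E 2 →ᵃ[ℝ] E 2).comp L.toAffineMap x := by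
      funext x
      simp [AffineEquiv.constVAdd_apply, vadd_eq_add, add_comm]
    rw [hf, AffineMap.image_convexHull]
    congr 1
    rw [Set.image_insert_eq, Set.image_insert_eq, Set.image_singleton]
    simp only [AffineMap.comp_apply, LinearMap.coe_toAffineMap, map_zero, hLe1, hLe2]
    simp [AffineEquiv.constVAdd_apply, vadd_eq_add, sub_add_cancel]
  have hsub : K - K = L '' HH := by
    rw [← TT_sub_TT, hKim]
    ext z
    simp only [Set.mem_sub, Set.mem_image]
    constructor
    · rintro ⟨_, ⟨p, hp, rfl⟩, _, ⟨q, hq, rfl⟩, rfl⟩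
      exact ⟨p - q, Set.sub_mem_sub hp hq, by rw [map_sub]; abel⟩
    · rintro ⟨_, ⟨p, hp, q, hq, rfl⟩, rfl⟩
      exact ⟨L p + a, ⟨p, hp, rfl⟩, L q + a, ⟨q, hq, rfl⟩, by rw [map_sub]; abel⟩
  have hvolK : volume K = ENNReal.ofReal |LinearMap.det L| * ENNReal.ofReal (1/2) := by
    rw [hKim]
    have : (fun x => L x + a) '' TT = a +ᵥ (L '' TT) := by
      ext z
      simp only [Set.mem_image, Set.mem_vadd_set]
      constructor
      · rintro ⟨p, hp, rfl⟩; exact ⟨L p, ⟨p, hp, rfl⟩, by simp [vadd_eq_add, add_comm]⟩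
      · rintro ⟨_, ⟨p, hp, rfl⟩, rfl⟩; exact ⟨p, hp, by simp [vadd_eq_add, add_comm]⟩
    rw [this, measure_vadd, Measure.addHaar_image_linearMap, vol_TT]
  have hvolD : volume (K - K) = ENNReal.ofReal |LinearMap.det L| * ENNReal.ofReal 3 := by
    rw [hsub, Measure.addHaar_image_linearMap, vol_HH]
  rw [hvolD, hvolK]
  rw [show (6:ENNReal) = ENNReal.ofReal 6 by simp]
  rw [← ENNReal.ofReal_mul (by norm_num), ← ENNReal.ofReal_mul (by positivity),
    ← ENNReal.ofReal_mul (by norm_num)]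
  congr 1
  ring


/-- Planar Rogers–Shephard inequality (`p = 1`): `V₂(K +₁ (−K)) ≤ 6 V₂(K)`, with equality
when `K` is a triangle. -/
theorem planar_rogers_shephard (K : Set (E 2)) (hKco : Convex ℝ K) (hKcp : IsCompact K)
    (h0K : (0 : E 2) ∈ K) (hint : (interior K).Nonempty) :
    volume (pSum K (-K) 1) ≤ 6 * volume K ∧
    (∀ a b c : E 2, AffineIndependent ℝ ![a, b, c] → K = convexHull ℝ {a, b, c} →
      volume (pSum K (-K) 1) = 6 * volume K) := by
  have hps : pSum K (-K) 1 = K - K := pSum_eq_sub hKco hKcp h0K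
  constructor
  · rw [hps]
    exact main_ineq hKco hKcp h0K hint
  · intro a b c _ hK
    rw [hps]
    exact triangle_case a b c K hK
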